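/- Let $q$ be a (rational) prime with $q \equiv 3 \pmod 4$, so that $q$ is a prime element of $\mathbb{Z}[i]$, and let $a, b$ be integers such that $q$ does not divide $a + bi$ in $\mathbb{Z}[i]$. Then the residue class of $a+bi$ in $\mathbb{Z}[i]/q\mathbb{Z}[i]$ is a square if and only if the Legendre symbol $\left(\frac{a^2+b^2}{q}\right)$ equals $1$. -/

import Mathlib

set_option maxHeartbeats 1000000 in
set_option synthInstance.maxHeartbeats 400000 in
/-- For a rational prime `q ≡ 3 (mod 4)` (a Gaussian prime) and `a + bi` not divisible
by `q`, the class of `a + bi` in `ℤ[i]/qℤ[i]` is a square iff the Legendre symbol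
`((a² + b²) / q)` equals `1`. -/
theorem stmt12 (q : ℕ) [Fact q.Prime] (hq3 : q % 4 = 3) (a b : ℤ)
    (h : ¬ ((q : GaussianInt) ∣ (⟨a, b⟩ : GaussianInt))) :
    IsSquare (Ideal.Quotient.mk (Ideal.span {(q : GaussianInt)}) (⟨a, b⟩ : GaussianInt)) ↔
      legendreSym q (a ^ 2 + b ^ 2) = 1 := by
  have hq : q.Prime := Fact.out
  have hqodd : q % 2 = 1 := by omega
  have hq2 : q ≠ 2 := by omega
  have hp : Prime (q : GaussianInt) := GaussianInt.prime_of_nat_prime_of_mod_four_eq_three q hq3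
  -- divisibility in ℤ[i] by q in terms of components
  have hdvd : ∀ x y : ℤ, (q : GaussianInt) ∣ (⟨x, y⟩ : GaussianInt) ↔ (q:ℤ) ∣ x ∧ (q:ℤ) ∣ y := by
    intro x y
    have : ((q:ℕ) : GaussianInt) = ((q:ℤ) : GaussianInt) := by push_cast; rfl
    rw [this, Zsqrtd.intCast_dvd]
  haveI hImax : (Ideal.span {(q : GaussianInt)}).IsMaximal :=
    PrincipalIdealRing.isMaximal_of_irreducible hp.irreducible
  letI : Field (GaussianInt ⧸ Ideal.span {(q : GaussianInt)}) :=
    Ideal.Quotient.field (Ideal.span {(q : GaussianInt)})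
  have hqR : ((q : ℕ) : GaussianInt ⧸ Ideal.span {(q : GaussianInt)}) = 0 := by
    rw [← map_natCast (Ideal.Quotient.mk (Ideal.span {(q : GaussianInt)}))]
    exact Ideal.Quotient.eq_zero_iff_mem.mpr (Ideal.mem_span_singleton_self _)
  have hchar : ringChar (GaussianInt ⧸ Ideal.span {(q : GaussianInt)}) = q := by
    have hd := ringChar.dvd hqR
    rcases (Nat.Prime.eq_one_or_self_of_dvd hq _ hd) with h1 | h1
    · have h0 := CharP.cast_eq_zero (GaussianInt ⧸ Ideal.span {(q : GaussianInt)})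
        (ringChar (GaussianInt ⧸ Ideal.span {(q : GaussianInt)}))
      rw [h1] at h0
      simp at h0
    · exact h1
  haveI hCh : CharP (GaussianInt ⧸ Ideal.span {(q : GaussianInt)}) q := by
    haveI := ringChar.charP (GaussianInt ⧸ Ideal.span {(q : GaussianInt)})
    exact CharP.congr _ hchar
  -- the cardinality
  let g : ZMod q × ZMod q → GaussianInt ⧸ Ideal.span {(q : GaussianInt)} := fun x =>
    Ideal.Quotient.mk _ (⟨(x.1.val : ℤ), (x.2.val : ℤ)⟩ : GaussianInt)
  have hgbij : Function.Bijective g := by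
    constructor
    · rintro ⟨x1, x2⟩ ⟨y1, y2⟩ hxy
      have := Ideal.Quotient.eq.mp hxy
      rw [Ideal.mem_span_singleton] at this
      have hsub : ((⟨(x1.val : ℤ), (x2.val : ℤ)⟩ : GaussianInt) - ⟨(y1.val : ℤ), (y2.val : ℤ)⟩)
          = (⟨(x1.val : ℤ) - y1.val, (x2.val : ℤ) - y2.val⟩ : GaussianInt) := rfl
      rw [hsub, hdvd] at this
      obtain ⟨h1, h2⟩ := this
      have e1 : (x1.val : ZMod q) = (y1.val : ZMod q) := by
        have h0 : (((x1.val : ℤ) - y1.val : ℤ) : ZMod q) = 0 :=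
          (ZMod.intCast_zmod_eq_zero_iff_dvd _ q).mpr h1
        push_cast at h0
        exact sub_eq_zero.mp h0
      have e2 : (x2.val : ZMod q) = (y2.val : ZMod q) := by
        have h0 : (((x2.val : ℤ) - y2.val : ℤ) : ZMod q) = 0 :=
          (ZMod.intCast_zmod_eq_zero_iff_dvd _ q).mpr h2
        push_cast at h0
        exact sub_eq_zero.mp h0
      simp only [ZMod.natCast_val, ZMod.cast_id] at e1 e2
      exact Prod.ext e1 e2
    · intro z
      obtain ⟨z, rfl⟩ := Ideal.Quotient.mk_surjective z
      refine ⟨⟨(z.re : ZMod q), (z.im : ZMod q)⟩, ?_⟩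
      apply Ideal.Quotient.eq.mpr
      rw [Ideal.mem_span_singleton]
      have hsub : ((⟨(((z.re : ZMod q)).val : ℤ), (((z.im : ZMod q)).val : ℤ)⟩ : GaussianInt) - z)
          = (⟨(((z.re : ZMod q)).val : ℤ) - z.re, (((z.im : ZMod q)).val : ℤ) - z.im⟩ : GaussianInt) := rfl
      rw [hsub, hdvd]
      constructor
      · rw [← ZMod.intCast_zmod_eq_zero_iff_dvd]
        push_cast
        simp [ZMod.intCast_cast, ZMod.natCast_val]
      · rw [← ZMod.intCast_zmod_eq_zero_iff_dvd]
        push_cast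
        simp [ZMod.intCast_cast, ZMod.natCast_val]
  haveI : Finite (GaussianInt ⧸ Ideal.span {(q : GaussianInt)}) :=
    Finite.of_surjective g hgbij.2
  letI : Fintype (GaussianInt ⧸ Ideal.span {(q : GaussianInt)}) := Fintype.ofFinite _
  have hcard : Fintype.card (GaussianInt ⧸ Ideal.span {(q : GaussianInt)}) = q ^ 2 := by
    rw [← Nat.card_eq_fintype_card, ← Nat.card_eq_of_bijective g hgbij]
    simp [Nat.card_eq_fintype_card, ZMod.card, sq]

  -- nonzero element
  have hx0 : Ideal.Quotient.mk (Ideal.span {(q : GaussianInt)}) (⟨a, b⟩ : GaussianInt) ≠ 0 := by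
    intro h0
    exact h (Ideal.mem_span_singleton.mp (Ideal.Quotient.eq_zero_iff_mem.mp h0))
  -- the norm is nonzero mod q
  have hc0 : ((a ^ 2 + b ^ 2 : ℤ) : ZMod q) ≠ 0 := by
    intro h0
    have hdvdZ : (q : ℤ) ∣ a ^ 2 + b ^ 2 := (ZMod.intCast_zmod_eq_zero_iff_dvd _ q).mp h0
    have hfac : ((a ^ 2 + b ^ 2 : ℤ) : GaussianInt) = (⟨a, b⟩ : GaussianInt) * ⟨a, -b⟩ := by
      ext
      · simp only [Zsqrtd.re_intCast, Zsqrtd.re_mul]; ring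
      · simp only [Zsqrtd.im_intCast, Zsqrtd.im_mul]; ring
    have hqdvd : (q : GaussianInt) ∣ (⟨a, b⟩ : GaussianInt) * ⟨a, -b⟩ := by
      rw [← hfac]
      have hcast : ((q : ℕ) : GaussianInt) = ((q : ℤ) : GaussianInt) := by push_cast; rfl
      rw [hcast]
      simpa only [map_intCast, eq_intCast] using map_dvd (Int.castRingHom GaussianInt) hdvdZ
    rcases hp.2.2 _ _ hqdvd with hd1 | hd2
    · exact h hd1
    · obtain ⟨ha1, hb1⟩ := (hdvd a (-b)).mp hd2
      exact h ((hdvd a b).mpr ⟨ha1, (dvd_neg).mp hb1⟩)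
  -- Frobenius: x ^ q is the conjugate
  obtain ⟨k, hk⟩ : ∃ k, q = 4 * k + 3 := ⟨q / 4, by omega⟩
  have hii2 : (Ideal.Quotient.mk (Ideal.span {(q : GaussianInt)}) (⟨0, 1⟩ : GaussianInt)) ^ 2
      = -1 := by
    have h2 : (⟨0, 1⟩ : GaussianInt) ^ 2 = -1 := by ext <;> simp [pow_two]
    rw [← map_pow, h2, map_neg, map_one]
  have hiiq : (Ideal.Quotient.mk (Ideal.span {(q : GaussianInt)}) (⟨0, 1⟩ : GaussianInt)) ^ q
      = -(Ideal.Quotient.mk (Ideal.span {(q : GaussianInt)}) (⟨0, 1⟩ : GaussianInt)) := by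
    have h3 : (Ideal.Quotient.mk (Ideal.span {(q : GaussianInt)}) (⟨0, 1⟩ : GaussianInt)) ^ q
        = (((Ideal.Quotient.mk (Ideal.span {(q : GaussianInt)}) (⟨0, 1⟩ : GaussianInt)) ^ 2)
          ^ (2 * k + 1)) * Ideal.Quotient.mk (Ideal.span {(q : GaussianInt)}) (⟨0, 1⟩ : GaussianInt) := by
      rw [← pow_mul, ← pow_succ]
      congr 1
      omega
    rw [h3, hii2, Odd.neg_one_pow ⟨k, by ring⟩]
    ring
  set φ := ZMod.castHom (dvd_refl q) (GaussianInt ⧸ Ideal.span {(q : GaussianInt)}) with hφ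
  have hdecomp : ∀ x y : ℤ, (⟨x, y⟩ : GaussianInt) = (x : GaussianInt) + (y : GaussianInt) * ⟨0, 1⟩ := by
    intro x y; ext <;> simp
  have hintpow : ∀ n : ℤ, ((n : GaussianInt ⧸ Ideal.span {(q : GaussianInt)})) ^ q = n := by
    intro n
    rw [← map_intCast φ n, ← map_pow, ZMod.pow_card]
  have hxq : (Ideal.Quotient.mk (Ideal.span {(q : GaussianInt)}) (⟨a, b⟩ : GaussianInt)) ^ q
      = Ideal.Quotient.mk (Ideal.span {(q : GaussianInt)}) (⟨a, -b⟩ : GaussianInt) := by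
    rw [hdecomp a b, hdecomp a (-b), map_add, map_add, map_mul, map_mul,
      map_intCast, map_intCast, map_intCast, add_pow_char, mul_pow, hintpow, hintpow, hiiq]
    push_cast
    ring
  have hxq1 : (Ideal.Quotient.mk (Ideal.span {(q : GaussianInt)}) (⟨a, b⟩ : GaussianInt)) ^ (q + 1)
      = ((a ^ 2 + b ^ 2 : ℤ) : GaussianInt ⧸ Ideal.span {(q : GaussianInt)}) := by
    rw [pow_succ, hxq, ← map_mul]
    have : (⟨a, -b⟩ : GaussianInt) * ⟨a, b⟩ = ((a ^ 2 + b ^ 2 : ℤ) : GaussianInt) := by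
      ext
      · simp only [Zsqrtd.re_intCast, Zsqrtd.re_mul]; ring
      · simp only [Zsqrtd.im_intCast, Zsqrtd.im_mul]; ring
    rw [this, map_intCast]
  -- exponent arithmetic
  have hexp : q ^ 2 / 2 = (q + 1) * (q / 2) := by
    obtain ⟨m, rfl⟩ : ∃ m, q = 2 * m + 1 := ⟨q / 2, by omega⟩
    have h2 : (2 * m + 1) / 2 = m := by omega
    rw [show (2 * m + 1) ^ 2 = 2 * ((2 * m + 1 + 1) * m) + 1 by ring, h2,
      Nat.mul_add_div (by norm_num)]
    norm_num
  -- put everything together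
  rw [FiniteField.isSquare_iff (by rw [hchar]; exact hq2) hx0, hcard, hexp, pow_mul, hxq1,
    ← map_intCast φ (a ^ 2 + b ^ 2), ← map_pow, ← map_one φ,
    (RingHom.injective φ).eq_iff,
    legendreSym.eq_one_iff q hc0,
    FiniteField.isSquare_iff (by rw [ZMod.ringChar_zmod_n]; exact hq2) hc0, ZMod.card]
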